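/- arXiv:2011.12945 — 3 statements merged into one kernel-verified Lean document; each statement's English description precedes it below -/
import Mathlib

section
/- Let f₁, ..., f_m : ℝ → ℝ be a linearly independent family of continuous functions. Then there exist points c₁, ..., c_m ∈ ℝ such that the m × m matrix A with entries A_{ji} = f_i(c_j) is nonsingular. -/
/-- For a linearly independent family of continuous functions `f₁, …, f_m : ℝ → ℝ`
there exist points `c₁, …, c_m` such that the matrix `(f_i(c_j))` is nonsingular. -/
theorem stmt_6 {m : ℕ} (f : Fin m → ℝ → ℝ)
    (hcont : ∀ i, Continuous (f i))
    (hli : LinearIndependent ℝ f) :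
    ∃ c : Fin m → ℝ, (Matrix.of fun j i => f i (c j)).det ≠ 0 := by
  classical
  set E : ℝ → (Fin m → ℝ) := fun x i => f i x with hE
  set S : Submodule ℝ (Fin m → ℝ) := Submodule.span ℝ (Set.range E) with hS
  have hStop : S = ⊤ := by
    by_contra hne
    obtain ⟨φ, hφ0, hφ⟩ := Submodule.exists_dual_map_eq_bot_of_lt_top
      (lt_top_iff_ne_top.mpr hne) inferInstance
    have hvanish : ∀ x : ℝ, φ (E x) = 0 := by
      intro x
      have : φ (E x) ∈ S.map φ := Submodule.mem_map_of_mem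
        (Submodule.subset_span ⟨x, rfl⟩)
      rw [hφ] at this
      simpa using this
    set w : Fin m → ℝ := fun i => φ (Pi.single i 1) with hw
    have hsum : ∀ x : ℝ, ∑ i, w i * f i x = 0 := by
      intro x
      have := hvanish x
      have hrep : E x = ∑ i, (f i x) • (Pi.single i 1 : Fin m → ℝ) := by
        funext j
        simp [hE, Pi.single_apply, Finset.sum_ite_eq', mul_comm]
      rw [hrep] at this
      simpa [hw, mul_comm] using this
    have hw0 : ∀ i, w i = 0 := by
      have := (Fintype.linearIndependent_iff.mp hli) w ?_
      · exact this
      · funext x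
        simpa using hsum x
    apply hφ0
    apply (Pi.basisFun ℝ (Fin m)).ext
    intro i
    simpa [Pi.basisFun_apply] using hw0 i
  obtain ⟨b, hbsub, hbspan, hbli⟩ := exists_linearIndependent ℝ (Set.range E)
  rw [← hS, hStop] at hbspan
  haveI : Finite b := hbli.finite
  haveI : Fintype b := Fintype.ofFinite b
  let B : Module.Basis b ℝ (Fin m → ℝ) := Module.Basis.mk hbli (by rw [Subtype.range_coe]; exact hbspan.ge)
  have hcard : Fintype.card b = m := by
    have := Module.finrank_eq_card_basis B
    simpa [Module.finrank_fintype_fun_eq_card] using this.symm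
  let e : Fin m ≃ b := (Fintype.equivFinOfCardEq hcard).symm
  have hex : ∀ j : Fin m, ∃ x : ℝ, E x = (e j : Fin m → ℝ) := fun j => hbsub (e j).2
  choose c hc using hex
  refine ⟨c, ?_⟩
  have hrows : LinearIndependent ℝ (fun j : Fin m => (Matrix.of fun j i => f i (c j)) j) := by
    have : (fun j : Fin m => (Matrix.of fun j i => f i (c j)) j)
        = (fun (x : b) => (x : Fin m → ℝ)) ∘ e := by
      funext j
      have := hc j
      funext i
      simpa [hE] using congrFun this i
    rw [this]
    exact hbli.comp e e.injective
  have := Matrix.linearIndependent_rows_iff_isUnit.mp hrows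
  have hdet := (Matrix.isUnit_iff_isUnit_det _).mp this
  exact (isUnit_iff_ne_zero.mp hdet)
end

section
/- For k ≥ 1, the family of 3k functions on ℝ given by f_i(x) = (1/2)·erfc((μ_i − x)/(√2 σ_i)) for 1 ≤ i ≤ k, g_i(x) = −(m_i/(√(2π) σ_i))·exp(−(x − μ_i)²/(2σ_i²)) for 1 ≤ i ≤ k, and h_i(x) = (m_i (μ_i − x)/(2√(2π) σ_i³))·exp(−(x − μ_i)²/(2σ_i²)) for 1 ≤ i ≤ k, is linearly independent, provided the pairs (μ_i, σ_i) are pairwise distinct and all m_i ≠ 0, σ_i > 0. -/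
set_option maxHeartbeats 1600000

open Real Filter MeasureTheory

/-- The complementary error function `erfc x = (2/√π) ∫_x^∞ e^{-t²} dt`. -/
noncomputable def erfc (x : ℝ) : ℝ :=
  (2 / Real.sqrt Real.pi) * ∫ t in Set.Ioi x, Real.exp (-t ^ 2)

section Aux

lemma quad_atBot {α c : ℝ} (hα : α < 0) :
    Tendsto (fun x : ℝ => α * x ^ 2 + c * x) atTop atBot := by
  have h1 : Tendsto (fun x : ℝ => x * (α * x + c)) atTop atBot := by
    apply Tendsto.atTop_mul_atBot₀ tendsto_id
    apply tendsto_atBot_add_const_right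
    exact (tendsto_const_mul_atBot_of_neg hα).mpr tendsto_id
  refine h1.congr (fun x => by ring)

lemma exp_quad_tendsto_zero {α c : ℝ} (hα : α < 0) :
    Tendsto (fun x : ℝ => Real.exp (α * x ^ 2 + c * x)) atTop (nhds 0) :=
  Real.tendsto_exp_atBot.comp (quad_atBot hα)

lemma pow_mul_exp_lin_tendsto_zero (d : ℕ) {β : ℝ} (hβ : β < 0) :
    Tendsto (fun x : ℝ => x ^ d * Real.exp (β * x)) atTop (nhds 0) := by
  have hb : 0 < -β := by linarith
  have h1 : Tendsto (fun x : ℝ => -β * x) atTop atTop :=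
    tendsto_id.const_mul_atTop hb
  have h2 : Tendsto (fun y : ℝ => y ^ d * Real.exp (-y)) atTop (nhds 0) :=
    tendsto_pow_mul_exp_neg_atTop_nhds_zero d
  have h3 := (h2.comp h1).const_mul ((-β)⁻¹ ^ d)
  rw [mul_zero] at h3
  refine h3.congr (fun x => ?_)
  simp only [Function.comp]
  rw [mul_pow, show -(-β * x) = β * x by ring, ← mul_assoc, ← mul_assoc,
    ← mul_pow, inv_mul_cancel₀ (by linarith : -β ≠ 0), one_pow, one_mul]

lemma pow_mul_exp_quad_tendsto_zero (d : ℕ) {α β : ℝ}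
    (h : α < 0 ∨ (α = 0 ∧ β < 0)) :
    Tendsto (fun x : ℝ => x ^ d * Real.exp (α * x ^ 2 + β * x)) atTop (nhds 0) := by
  rcases h with hα | ⟨hα, hβ⟩
  · have h1 := (pow_mul_exp_lin_tendsto_zero d (show (-1:ℝ) < 0 by norm_num)).mul
      (exp_quad_tendsto_zero (c := β + 1) hα)
    rw [mul_zero] at h1
    refine h1.congr (fun x => ?_)
    rw [mul_assoc, ← Real.exp_add]
    ring_nf
  · subst hα
    refine (pow_mul_exp_lin_tendsto_zero d hβ).congr (fun x => by ring_nf)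

lemma coeff_zero_of_tendsto_zero {A B C : ℝ}
    (h : Tendsto (fun x : ℝ => A + B * x + C * x ^ 2) atTop (nhds 0)) :
    A = 0 ∧ B = 0 ∧ C = 0 := by
  have hinv : Tendsto (fun x : ℝ => x⁻¹) atTop (nhds 0) := tendsto_inv_atTop_zero
  have hC : C = 0 := by
    have h1 : Tendsto (fun x : ℝ => (A + B * x + C * x ^ 2) * (x⁻¹) ^ 2) atTop (nhds (0 * 0 ^ 2)) :=
      h.mul (hinv.pow 2)
    have h2 : Tendsto (fun x : ℝ => A * (x⁻¹) ^ 2 + B * x⁻¹ + C) atTop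
        (nhds (A * 0 ^ 2 + B * 0 + C)) := by
      exact (((tendsto_const_nhds.mul (hinv.pow 2))).add (tendsto_const_nhds.mul hinv)).add
        tendsto_const_nhds
    have heq : ∀ᶠ x : ℝ in atTop, (A + B * x + C * x ^ 2) * (x⁻¹) ^ 2
        = A * (x⁻¹) ^ 2 + B * x⁻¹ + C := by
      filter_upwards [eventually_gt_atTop (0:ℝ)] with x hx
      field_simp
    have := tendsto_nhds_unique (h1.congr' heq) h2
    simpa using this.symm
  subst hC
  have hB : B = 0 := by
    have h1 : Tendsto (fun x : ℝ => (A + B * x + 0 * x ^ 2) * x⁻¹) atTop (nhds (0 * 0)) :=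
      h.mul hinv
    have h2 : Tendsto (fun x : ℝ => A * x⁻¹ + B) atTop (nhds (A * 0 + B)) :=
      (tendsto_const_nhds.mul hinv).add tendsto_const_nhds
    have heq : ∀ᶠ x : ℝ in atTop, (A + B * x + 0 * x ^ 2) * x⁻¹ = A * x⁻¹ + B := by
      filter_upwards [eventually_gt_atTop (0:ℝ)] with x hx
      field_simp
      ring
    have := tendsto_nhds_unique (h1.congr' heq) h2
    simpa using this.symm
  subst hB
  have hA : A = 0 := by
    have h2 : Tendsto (fun x : ℝ => A + 0 * x + 0 * x ^ 2) atTop (nhds A) := by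
      simp only [zero_mul, add_zero]; exact (tendsto_const_nhds : Tendsto (fun _ : ℝ => A) atTop (nhds A))
    exact tendsto_nhds_unique h2 h
  exact ⟨hA, rfl, rfl⟩

lemma main_lemma {ι : Type*} [DecidableEq ι] (s : Finset ι) :
    ∀ (α β A B C : ι → ℝ),
    (∀ i ∈ s, α i < 0) →
    (∀ i ∈ s, ∀ j ∈ s, i ≠ j → (α i, β i) ≠ (α j, β j)) →
    (∀ x : ℝ, ∑ i ∈ s, (A i + B i * x + C i * x ^ 2) * Real.exp (α i * x ^ 2 + β i * x) = 0) →
    ∀ i ∈ s, A i = 0 ∧ B i = 0 ∧ C i = 0 := by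
  induction s using Finset.strongInduction with
  | _ s ih =>
    intro α β A B C hneg hdist hsum
    rcases s.eq_empty_or_nonempty with rfl | hne
    · intro i hi; exact absurd hi (by simp)
    obtain ⟨i0, hi0, hmax⟩ := Finset.exists_max_image s (fun i => toLex (α i, β i)) hne
    have hlt : ∀ i ∈ s, i ≠ i0 →
        (α i - α i0 < 0 ∨ (α i - α i0 = 0 ∧ β i - β i0 < 0)) := by
      intro i hi hne'
      have h1 : toLex (α i, β i) < toLex (α i0, β i0) := by
        refine lt_of_le_of_ne (hmax i hi) ?_
        intro hEq
        exact hdist i hi i0 hi0 hne' (by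
          have := toLex.injective hEq
          exact this)
      rcases Prod.Lex.toLex_lt_toLex.1 h1 with h | ⟨h1, h2⟩
      · left; linarith
      · right; exact ⟨by linarith, by linarith⟩
    have key : ∀ x : ℝ, A i0 + B i0 * x + C i0 * x ^ 2
        = -∑ i ∈ s.erase i0, (A i + B i * x + C i * x ^ 2) * Real.exp ((α i - α i0) * x ^ 2 + (β i - β i0) * x) := by
      intro x
      have h0 := hsum x
      have h1 : ∑ i ∈ s, (A i + B i * x + C i * x ^ 2) * Real.exp ((α i - α i0) * x ^ 2 + (β i - β i0) * x) = 0 := by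
        have h2 : ∑ i ∈ s, (A i + B i * x + C i * x ^ 2) * Real.exp ((α i - α i0) * x ^ 2 + (β i - β i0) * x)
            = ∑ i ∈ s, ((A i + B i * x + C i * x ^ 2)
              * Real.exp (α i * x ^ 2 + β i * x)) * Real.exp (-(α i0 * x ^ 2 + β i0 * x)) := by
          refine Finset.sum_congr rfl (fun i _ => ?_)
          rw [mul_assoc, ← Real.exp_add]
          congr 2
          ring
        rw [h2, ← Finset.sum_mul, h0, zero_mul]
      rw [← Finset.add_sum_erase s _ hi0] at h1
      have hE0 : Real.exp ((α i0 - α i0) * x ^ 2 + (β i0 - β i0) * x) = 1 := by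
        simp
      rw [hE0, mul_one] at h1
      linarith
    have hT : Tendsto (fun x : ℝ => A i0 + B i0 * x + C i0 * x ^ 2) atTop (nhds 0) := by
      have hsum0 : Tendsto (fun x : ℝ =>
          -∑ i ∈ s.erase i0, (A i + B i * x + C i * x ^ 2) * Real.exp ((α i - α i0) * x ^ 2 + (β i - β i0) * x)) atTop (nhds 0) := by
        rw [show (0:ℝ) = -0 by ring]
        refine Tendsto.neg ?_
        rw [show (0:ℝ) = ∑ i ∈ s.erase i0, (0:ℝ) by simp]
        refine tendsto_finset_sum _ (fun i hi => ?_)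
        have hcond := hlt i (Finset.mem_of_mem_erase hi) (Finset.ne_of_mem_erase hi)
        have t0 := (pow_mul_exp_quad_tendsto_zero 0 hcond).const_mul (A i)
        have t1 := (pow_mul_exp_quad_tendsto_zero 1 hcond).const_mul (B i)
        have t2 := (pow_mul_exp_quad_tendsto_zero 2 hcond).const_mul (C i)
        rw [mul_zero] at t0 t1 t2
        have := (t0.add t1).add t2
        rw [add_zero, add_zero] at this
        refine this.congr (fun x => ?_)
        simp only [pow_zero, pow_one]
        ring
      exact hsum0.congr (fun x => (key x).symm)
    obtain ⟨hA0, hB0, hC0⟩ := coeff_zero_of_tendsto_zero hT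
    have hsum' : ∀ x : ℝ, ∑ i ∈ s.erase i0,
        (A i + B i * x + C i * x ^ 2) * Real.exp (α i * x ^ 2 + β i * x) = 0 := by
      intro x
      have h0 := hsum x
      rw [← Finset.add_sum_erase s _ hi0, hA0, hB0, hC0] at h0
      simpa using h0
    have hrec := ih (s.erase i0) (Finset.erase_ssubset hi0) α β A B C
      (fun i hi => hneg i (Finset.mem_of_mem_erase hi))
      (fun i hi j hj => hdist i (Finset.mem_of_mem_erase hi) j (Finset.mem_of_mem_erase hj))
      hsum'
    intro i hi
    by_cases h : i = i0
    · subst h; exact ⟨hA0, hB0, hC0⟩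
    · exact hrec i (Finset.mem_erase.2 ⟨h, hi⟩)

lemma gauss_integrable : Integrable (fun t : ℝ => Real.exp (-t ^ 2)) := by
  have := integrable_exp_neg_mul_sq (show (0:ℝ) < 1 by norm_num)
  simpa using this

lemma erfc_hasDerivAt (x : ℝ) :
    HasDerivAt erfc (-(2 / Real.sqrt Real.pi) * Real.exp (-x ^ 2)) x := by
  have hg := gauss_integrable
  have hrepr : ∀ y : ℝ, erfc y = (2 / Real.sqrt Real.pi) *
      ((∫ t : ℝ, Real.exp (-t ^ 2)) - ((∫ t in Set.Iic 0, Real.exp (-t ^ 2))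
        + ∫ t in (0:ℝ)..y, Real.exp (-t ^ 2))) := by
    intro y
    rw [erfc]
    congr 1
    have h1 := intervalIntegral.integral_Iic_add_Ioi (b := y) hg.integrableOn hg.integrableOn
    have h2 := intervalIntegral.integral_Iic_sub_Iic (a := (0:ℝ)) (b := y)
      hg.integrableOn hg.integrableOn
    linarith
  have hftc : HasDerivAt (fun y : ℝ => ∫ t in (0:ℝ)..y, Real.exp (-t ^ 2))
      (Real.exp (-x ^ 2)) x := by
    refine intervalIntegral.integral_hasDerivAt_right hg.intervalIntegrable ?_ ?_
    · exact (Real.continuous_exp.comp (continuous_pow 2).neg).stronglyMeasurableAtFilter _ _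
    · exact (Real.continuous_exp.comp (continuous_pow 2).neg).continuousAt
  have h3 : HasDerivAt (fun y : ℝ => (2 / Real.sqrt Real.pi) *
      ((∫ t : ℝ, Real.exp (-t ^ 2)) - ((∫ t in Set.Iic 0, Real.exp (-t ^ 2))
        + ∫ t in (0:ℝ)..y, Real.exp (-t ^ 2))))
      ((2 / Real.sqrt Real.pi) * (-Real.exp (-x ^ 2))) x :=
    ((hftc.const_add _).const_sub _).const_mul _
  have h4 : erfc = fun y : ℝ => (2 / Real.sqrt Real.pi) *
      ((∫ t : ℝ, Real.exp (-t ^ 2)) - ((∫ t in Set.Iic 0, Real.exp (-t ^ 2))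
        + ∫ t in (0:ℝ)..y, Real.exp (-t ^ 2))) := funext hrepr
  rw [h4]
  convert h3 using 1
  ring

lemma sqrt_two_pi_pos : 0 < Real.sqrt (2 * Real.pi) :=
  Real.sqrt_pos.2 (by positivity)

lemma E_hasDerivAt (μ σ : ℝ) (hσ : 0 < σ) (x : ℝ) :
    HasDerivAt (fun x : ℝ => Real.exp (-(x - μ) ^ 2 / (2 * σ ^ 2)))
      (Real.exp (-(x - μ) ^ 2 / (2 * σ ^ 2)) * (-(x - μ) / σ ^ 2)) x := by
  have hw : HasDerivAt (fun x : ℝ => -(x - μ) ^ 2 / (2 * σ ^ 2))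
      (-(2 * (x - μ) ^ 1 * 1) / (2 * σ ^ 2)) x := by
    exact ((((hasDerivAt_id x).sub_const μ).pow 2).neg).div_const _
  have := hw.exp
  convert this using 1
  have hσ' : σ ≠ 0 := ne_of_gt hσ
  field_simp

lemma f_hasDerivAt (μ σ : ℝ) (hσ : 0 < σ) (x : ℝ) :
    HasDerivAt (fun x : ℝ => (1 / 2) * erfc ((μ - x) / (Real.sqrt 2 * σ)))
      (1 / (Real.sqrt (2 * Real.pi) * σ) * Real.exp (-(x - μ) ^ 2 / (2 * σ ^ 2))) x := by
  have hu : HasDerivAt (fun x : ℝ => (μ - x) / (Real.sqrt 2 * σ))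
      (-1 / (Real.sqrt 2 * σ)) x := ((hasDerivAt_id x).const_sub μ).div_const _
  have hcomp := ((erfc_hasDerivAt ((μ - x) / (Real.sqrt 2 * σ))).comp x hu).const_mul (1/2 : ℝ)
  refine hcomp.congr_deriv ?_
  have h2 : ((μ - x) / (Real.sqrt 2 * σ)) ^ 2 = (x - μ) ^ 2 / (2 * σ ^ 2) := by
    rw [div_pow, mul_pow, Real.sq_sqrt (by norm_num : (0:ℝ) ≤ 2)]
    congr 1
    ring
  rw [show (-(((μ - x) / (Real.sqrt 2 * σ)) ^ 2)) = -(x - μ) ^ 2 / (2 * σ ^ 2) by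
    rw [h2]; ring]
  rw [Real.sqrt_mul (by norm_num : (0:ℝ) ≤ 2)]
  have hσ' : σ ≠ 0 := ne_of_gt hσ
  have hs2 : Real.sqrt 2 ≠ 0 := by positivity
  have hsp : Real.sqrt Real.pi ≠ 0 := by positivity
  field_simp

lemma g_hasDerivAt (μ σ m : ℝ) (hσ : 0 < σ) (x : ℝ) :
    HasDerivAt (fun x : ℝ => -(m / (Real.sqrt (2 * Real.pi) * σ))
        * Real.exp (-(x - μ) ^ 2 / (2 * σ ^ 2)))
      (m * (x - μ) / (Real.sqrt (2 * Real.pi) * σ ^ 3)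
        * Real.exp (-(x - μ) ^ 2 / (2 * σ ^ 2))) x := by
  have := (E_hasDerivAt μ σ hσ x).const_mul (-(m / (Real.sqrt (2 * Real.pi) * σ)))
  refine this.congr_deriv ?_
  have hσ' : σ ≠ 0 := ne_of_gt hσ
  have hsp : Real.sqrt (2 * Real.pi) ≠ 0 := ne_of_gt sqrt_two_pi_pos
  field_simp

lemma h_hasDerivAt (μ σ m : ℝ) (hσ : 0 < σ) (x : ℝ) :
    HasDerivAt (fun x : ℝ => (m * (μ - x) / (2 * Real.sqrt (2 * Real.pi) * σ ^ 3))
        * Real.exp (-(x - μ) ^ 2 / (2 * σ ^ 2)))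
      (m * ((x - μ) ^ 2 - σ ^ 2) / (2 * Real.sqrt (2 * Real.pi) * σ ^ 5)
        * Real.exp (-(x - μ) ^ 2 / (2 * σ ^ 2))) x := by
  have hp : HasDerivAt (fun x : ℝ => m * (μ - x) / (2 * Real.sqrt (2 * Real.pi) * σ ^ 3))
      (m * (-1) / (2 * Real.sqrt (2 * Real.pi) * σ ^ 3)) x :=
    (((hasDerivAt_id x).const_sub μ).const_mul m).div_const _
  have := hp.mul (E_hasDerivAt μ σ hσ x)
  refine this.congr_deriv ?_
  have hσ' : σ ≠ 0 := ne_of_gt hσ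
  have hsp : Real.sqrt (2 * Real.pi) ≠ 0 := ne_of_gt sqrt_two_pi_pos
  field_simp
  ring

lemma exp_decomp (μ σ x : ℝ) (hσ : σ ≠ 0) :
    Real.exp (-(x - μ) ^ 2 / (2 * σ ^ 2))
      = Real.exp (-μ ^ 2 / (2 * σ ^ 2))
        * Real.exp (-(1 / (2 * σ ^ 2)) * x ^ 2 + (μ / σ ^ 2) * x) := by
  rw [← Real.exp_add]
  congr 1
  field_simp
  ring

end Aux

/-- The `3k` functions `f_i(x) = (1/2) erfc((μ_i - x)/(√2 σ_i))`,
`g_i(x) = -(m_i/(√(2π) σ_i)) exp(-(x-μ_i)²/(2σ_i²))` and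
`h_i(x) = (m_i (μ_i - x)/(2√(2π) σ_i³)) exp(-(x-μ_i)²/(2σ_i²))` are linearly independent,
provided the pairs `(μ_i, σ_i)` are pairwise distinct, `m_i ≠ 0` and `σ_i > 0`. -/
theorem stmt_7 {k : ℕ} (hk : 1 ≤ k) (μ σ m : Fin k → ℝ)
    (hσ : ∀ i, 0 < σ i) (hm : ∀ i, m i ≠ 0)
    (hdist : ∀ i j, i ≠ j → (μ i, σ i) ≠ (μ j, σ j)) :
    LinearIndependent ℝ
      (Sum.elim
        (fun i : Fin k => fun x : ℝ => (1 / 2) * erfc ((μ i - x) / (Real.sqrt 2 * σ i)))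
        (Sum.elim
          (fun i : Fin k => fun x : ℝ =>
            -(m i / (Real.sqrt (2 * Real.pi) * σ i)) * Real.exp (-(x - μ i) ^ 2 / (2 * (σ i) ^ 2)))
          (fun i : Fin k => fun x : ℝ =>
            (m i * (μ i - x) / (2 * Real.sqrt (2 * Real.pi) * (σ i) ^ 3))
              * Real.exp (-(x - μ i) ^ 2 / (2 * (σ i) ^ 2))))) := by
  classical
  rw [Fintype.linearIndependent_iff]
  intro g hg
  set a : Fin k → ℝ := fun i => g (Sum.inl i) with ha
  set b : Fin k → ℝ := fun i => g (Sum.inr (Sum.inl i)) with hb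
  set c : Fin k → ℝ := fun i => g (Sum.inr (Sum.inr i)) with hc
  have hσ' : ∀ i, σ i ≠ 0 := fun i => ne_of_gt (hσ i)
  have hsp : Real.sqrt (2 * Real.pi) ≠ 0 := ne_of_gt sqrt_two_pi_pos
  -- pointwise vanishing of the linear combination
  have hzero : ∀ x : ℝ, ∑ i : Fin k,
      (a i * ((1 / 2) * erfc ((μ i - x) / (Real.sqrt 2 * σ i)))
        + (b i * (-(m i / (Real.sqrt (2 * Real.pi) * σ i))
            * Real.exp (-(x - μ i) ^ 2 / (2 * (σ i) ^ 2)))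
          + c i * ((m i * (μ i - x) / (2 * Real.sqrt (2 * Real.pi) * (σ i) ^ 3))
            * Real.exp (-(x - μ i) ^ 2 / (2 * (σ i) ^ 2))))) = 0 := by
    intro x
    have hg' := congrFun hg x
    simp only [Finset.sum_apply, Pi.smul_apply, smul_eq_mul, Pi.zero_apply,
      Fintype.sum_sum_type, Sum.elim_inl, Sum.elim_inr] at hg'
    rw [Finset.sum_add_distrib, Finset.sum_add_distrib]
    simpa using hg'
  -- coefficients for the main lemma
  set α : Fin k → ℝ := fun i => -(1 / (2 * (σ i) ^ 2)) with hα
  set β : Fin k → ℝ := fun i => μ i / (σ i) ^ 2 with hβ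
  set K : Fin k → ℝ := fun i => Real.exp (-(μ i) ^ 2 / (2 * (σ i) ^ 2)) with hK
  set A : Fin k → ℝ := fun i => K i * (a i / (Real.sqrt (2 * Real.pi) * σ i)
      - b i * m i * μ i / (Real.sqrt (2 * Real.pi) * (σ i) ^ 3)
      + c i * m i * ((μ i) ^ 2 - (σ i) ^ 2) / (2 * Real.sqrt (2 * Real.pi) * (σ i) ^ 5)) with hA
  set B : Fin k → ℝ := fun i => K i * (b i * m i / (Real.sqrt (2 * Real.pi) * (σ i) ^ 3)
      - c i * m i * μ i / (Real.sqrt (2 * Real.pi) * (σ i) ^ 5)) with hB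
  set C : Fin k → ℝ := fun i => K i * (c i * m i / (2 * Real.sqrt (2 * Real.pi) * (σ i) ^ 5)) with hC
  have hmainsum : ∀ x : ℝ,
      ∑ i : Fin k, (A i + B i * x + C i * x ^ 2) * Real.exp (α i * x ^ 2 + β i * x) = 0 := by
    intro x
    -- the derivative of the combination at x
    have hD : HasDerivAt (fun x : ℝ => ∑ i : Fin k,
        (a i * ((1 / 2) * erfc ((μ i - x) / (Real.sqrt 2 * σ i)))
          + (b i * (-(m i / (Real.sqrt (2 * Real.pi) * σ i))
              * Real.exp (-(x - μ i) ^ 2 / (2 * (σ i) ^ 2)))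
            + c i * ((m i * (μ i - x) / (2 * Real.sqrt (2 * Real.pi) * (σ i) ^ 3))
              * Real.exp (-(x - μ i) ^ 2 / (2 * (σ i) ^ 2))))))
        (∑ i : Fin k,
          (a i * (1 / (Real.sqrt (2 * Real.pi) * σ i)
              * Real.exp (-(x - μ i) ^ 2 / (2 * (σ i) ^ 2)))
            + (b i * (m i * (x - μ i) / (Real.sqrt (2 * Real.pi) * (σ i) ^ 3)
                * Real.exp (-(x - μ i) ^ 2 / (2 * (σ i) ^ 2)))
              + c i * (m i * ((x - μ i) ^ 2 - (σ i) ^ 2)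
                  / (2 * Real.sqrt (2 * Real.pi) * (σ i) ^ 5)
                * Real.exp (-(x - μ i) ^ 2 / (2 * (σ i) ^ 2)))))) x := by
      refine HasDerivAt.fun_sum (fun i _ => ?_)
      exact ((f_hasDerivAt (μ i) (σ i) (hσ i) x).const_mul (a i)).add
        (((g_hasDerivAt (μ i) (σ i) (m i) (hσ i) x).const_mul (b i)).add
          ((h_hasDerivAt (μ i) (σ i) (m i) (hσ i) x).const_mul (c i)))
    have h0 : HasDerivAt (fun x : ℝ => ∑ i : Fin k,
        (a i * ((1 / 2) * erfc ((μ i - x) / (Real.sqrt 2 * σ i)))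
          + (b i * (-(m i / (Real.sqrt (2 * Real.pi) * σ i))
              * Real.exp (-(x - μ i) ^ 2 / (2 * (σ i) ^ 2)))
            + c i * ((m i * (μ i - x) / (2 * Real.sqrt (2 * Real.pi) * (σ i) ^ 3))
              * Real.exp (-(x - μ i) ^ 2 / (2 * (σ i) ^ 2)))))) 0 x := by
      have hfz : (fun x : ℝ => ∑ i : Fin k,
          (a i * ((1 / 2) * erfc ((μ i - x) / (Real.sqrt 2 * σ i)))
            + (b i * (-(m i / (Real.sqrt (2 * Real.pi) * σ i))
                * Real.exp (-(x - μ i) ^ 2 / (2 * (σ i) ^ 2)))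
              + c i * ((m i * (μ i - x) / (2 * Real.sqrt (2 * Real.pi) * (σ i) ^ 3))
                * Real.exp (-(x - μ i) ^ 2 / (2 * (σ i) ^ 2)))))) = fun _ => (0:ℝ) :=
        funext hzero
      rw [hfz]
      exact hasDerivAt_const x 0
    have hder0 := hD.unique h0
    rw [← hder0]
    refine Finset.sum_congr rfl (fun i _ => ?_)
    rw [exp_decomp (μ i) (σ i) x (hσ' i)]
    simp only [hA, hB, hC, hK, hα, hβ]
    field_simp
    ring
  -- apply the main lemma
  have hneg : ∀ i ∈ Finset.univ (α := Fin k), α i < 0 := by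
    intro i _
    simp only [hα]
    have h1 := hσ i
    have h2 : 0 < 1 / (2 * σ i ^ 2) := by positivity
    linarith
  have hdist' : ∀ i ∈ Finset.univ (α := Fin k), ∀ j ∈ Finset.univ (α := Fin k),
      i ≠ j → (α i, β i) ≠ (α j, β j) := by
    intro i _ j _ hij hEq
    have h1 : α i = α j := (Prod.mk.injEq _ _ _ _ ▸ hEq : _ ∧ _).1
    have h2 : β i = β j := (Prod.mk.injEq _ _ _ _ ▸ hEq : _ ∧ _).2
    simp only [hα] at h1
    have hσeq : σ i = σ j := by
      have hsq : (σ i) ^ 2 = (σ j) ^ 2 := by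
        have hi := hσ i; have hj := hσ j
        field_simp at h1
        nlinarith [h1]
      nlinarith [hσ i, hσ j, hsq]
    have hμeq : μ i = μ j := by
      simp only [hβ] at h2
      rw [hσeq] at h2
      have := hσ j
      field_simp at h2
      exact h2
    exact hdist i j hij (by rw [hμeq, hσeq])
  have hABC := main_lemma Finset.univ α β A B C hneg hdist' hmainsum
  -- extract vanishing of a, b, c
  have hcz : ∀ i, c i = 0 := by
    intro i
    have hCi := (hABC i (Finset.mem_univ i)).2.2
    simp only [hC] at hCi
    rcases mul_eq_zero.mp hCi with h | h
    · exact absurd h (Real.exp_ne_zero _)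
    · rcases div_eq_zero_iff.mp h with h' | h'
      · rcases mul_eq_zero.mp h' with h'' | h''
        · exact h''
        · exact absurd h'' (hm i)
      · exact absurd h' (ne_of_gt (by have h1 := sqrt_two_pi_pos; have h2 := hσ i; positivity))
  have hbz : ∀ i, b i = 0 := by
    intro i
    have hBi := (hABC i (Finset.mem_univ i)).2.1
    simp only [hB, hcz i] at hBi
    rcases mul_eq_zero.mp hBi with h | h
    · exact absurd h (Real.exp_ne_zero _)
    · have hσi := hσ i
      field_simp at h
      have h3 : m i * (b i * σ i ^ 2) = 0 := by linarith
      rcases mul_eq_zero.mp h3 with h'' | h''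
      · exact absurd h'' (hm i)
      · exact (mul_eq_zero.mp h'').resolve_right (pow_ne_zero 2 (hσ' i))
  have haz : ∀ i, a i = 0 := by
    intro i
    have hAi := (hABC i (Finset.mem_univ i)).1
    simp only [hA, hcz i, hbz i] at hAi
    rcases mul_eq_zero.mp hAi with h | h
    · exact absurd h (Real.exp_ne_zero _)
    · have hσi := hσ i
      field_simp at h
      have h3 : a i * (2 * σ i ^ 4) = 0 := by linarith
      exact (mul_eq_zero.mp h3).resolve_right (by positivity)
  intro j
  rcases j with i | j
  · exact haz i
  · rcases j with i | i
    · exact hbz i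
    · exact hcz i
end

section
/- Let P be a k-component Gaussian mixture on ℝ with pairwise-distinct components N(μ_i, σ_i²) and strictly positive mixture weights m_i. Then the only parameter vectors (m'_1, ..., m'_k, μ'_1, ..., μ'_k, σ'²_1, ..., σ'²_k) with m'_i ∈ [0,1], Σ m'_i = 1, σ'_i > 0, for which the mixture Σ_i m'_i N(μ'_i, σ'²_i) equals P as a distribution, are those obtained from (m_i, μ_i, σ_i²) by permuting the component indices. -/
open MeasureTheory ProbabilityTheory

open Filter
open scoped ENNReal NNReal

lemma quad_tendsto {A B C : ℝ} (h : A < 0 ∨ (A = 0 ∧ B < 0)) :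
    Tendsto (fun x : ℝ => A * x ^ 2 + B * x + C) atTop atBot := by
  have hrw : (fun x : ℝ => A * x ^ 2 + B * x + C) = fun x : ℝ => x * (A * x + B) + C := by
    funext x; ring
  rw [hrw]
  apply tendsto_atBot_add_const_right
  rcases h with h | ⟨hA, hB⟩
  · refine Tendsto.atTop_mul_atBot₀ tendsto_id ?_
    apply tendsto_atBot_add_const_right
    exact (tendsto_const_mul_atBot_of_neg h).2 tendsto_id
  · simp only [hA, zero_mul, zero_add]
    exact (tendsto_mul_const_atBot_of_neg hB).2 tendsto_id

/-- Linear independence of distinct Gaussian density kernels. -/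
lemma gauss_li : ∀ (n : ℕ) (s : Finset (ℝ × ℝ)), s.card = n → (∀ q ∈ s, 0 < q.2) →
    ∀ a : ℝ × ℝ → ℝ,
    (∀ x : ℝ, ∑ q ∈ s, a q * Real.exp (-(x - q.1) ^ 2 / (2 * q.2)) = 0) →
    ∀ q ∈ s, a q = 0 := by
  intro n
  induction n with
  | zero =>
    intro s hs _ _ _ q hq
    rw [Finset.card_eq_zero] at hs
    simp [hs] at hq
  | succ n ih =>
    intro s hs hpos a hsum q hq
    have hne : s.Nonempty := ⟨q, hq⟩
    obtain ⟨q₀, hq₀s, hq₀max⟩ := s.exists_max_image (fun q => toLex (q.2, q.1)) hne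
    -- every other component's relative kernel tends to 0
    have key : ∀ r ∈ s, r ≠ q₀ →
        Tendsto (fun x : ℝ => Real.exp (-(x - r.1) ^ 2 / (2 * r.2)
          - -(x - q₀.1) ^ 2 / (2 * q₀.2))) atTop (nhds 0) := by
      intro r hr hrne
      have hr2 : 0 < r.2 := hpos r hr
      have hq02 : 0 < q₀.2 := hpos q₀ hq₀s
      have hrw : ∀ x : ℝ, -(x - r.1) ^ 2 / (2 * r.2) - -(x - q₀.1) ^ 2 / (2 * q₀.2)
          = (1 / (2 * q₀.2) - 1 / (2 * r.2)) * x ^ 2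
            + (r.1 / r.2 - q₀.1 / q₀.2) * x
            + (q₀.1 ^ 2 / (2 * q₀.2) - r.1 ^ 2 / (2 * r.2)) := by
        intro x; field_simp; ring
      have hle := hq₀max r hr
      rw [Prod.Lex.le_iff] at hle
      have hcase : (1 / (2 * q₀.2) - 1 / (2 * r.2)) < 0 ∨
          ((1 / (2 * q₀.2) - 1 / (2 * r.2)) = 0 ∧ (r.1 / r.2 - q₀.1 / q₀.2) < 0) := by
        rcases hle with hlt | ⟨heq2, hle1⟩
        · left
          have : 1 / (2 * q₀.2) < 1 / (2 * r.2) := by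
            apply one_div_lt_one_div_of_lt (by linarith) (by change r.2 < q₀.2 at hlt; linarith)
          linarith
        · right
          change r.2 = q₀.2 at heq2
          change r.1 ≤ q₀.1 at hle1
          have h1 : r.1 < q₀.1 := by
            rcases lt_or_eq_of_le hle1 with h | h
            · exact h
            · exact absurd (Prod.ext h heq2) hrne
          refine ⟨by rw [heq2]; ring, ?_⟩
          rw [heq2, sub_neg]
          gcongr
      have hq := quad_tendsto (C := q₀.1 ^ 2 / (2 * q₀.2) - r.1 ^ 2 / (2 * r.2)) hcase
      simp only [hrw]
      exact Real.tendsto_exp_atBot.comp hq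
    -- the rescaled total sum tends to a q₀, but is identically 0
    have hlim : Tendsto (fun x : ℝ => ∑ r ∈ s,
        a r * Real.exp (-(x - r.1) ^ 2 / (2 * r.2) - -(x - q₀.1) ^ 2 / (2 * q₀.2)))
        atTop (nhds (a q₀)) := by
      have : (a q₀ : ℝ) = ∑ r ∈ s, (if r = q₀ then a q₀ else 0) := by
        rw [Finset.sum_ite_eq' s q₀ (fun _ => a q₀)]
        simp [hq₀s]
      rw [this]
      refine tendsto_finset_sum _ fun r hr => ?_
      by_cases hr0 : r = q₀
      · subst hr0
        simp only [if_pos rfl, sub_self, Real.exp_zero, mul_one]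
        exact tendsto_const_nhds
      · simp only [if_neg hr0]
        simpa using (key r hr hr0).const_mul (a r)
    have hzero : Tendsto (fun x : ℝ => ∑ r ∈ s,
        a r * Real.exp (-(x - r.1) ^ 2 / (2 * r.2) - -(x - q₀.1) ^ 2 / (2 * q₀.2)))
        atTop (nhds 0) := by
      have : ∀ x : ℝ, ∑ r ∈ s,
          a r * Real.exp (-(x - r.1) ^ 2 / (2 * r.2) - -(x - q₀.1) ^ 2 / (2 * q₀.2)) = 0 := by
        intro x
        have : ∑ r ∈ s, a r * Real.exp (-(x - r.1) ^ 2 / (2 * r.2)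
            - -(x - q₀.1) ^ 2 / (2 * q₀.2))
            = (∑ r ∈ s, a r * Real.exp (-(x - r.1) ^ 2 / (2 * r.2)))
              * Real.exp (- (-(x - q₀.1) ^ 2 / (2 * q₀.2))) := by
          rw [Finset.sum_mul]
          refine Finset.sum_congr rfl fun r _ => ?_
          rw [mul_assoc, ← Real.exp_add, sub_eq_add_neg]
        rw [this, hsum x, zero_mul]
      simp only [this]
      exact tendsto_const_nhds
    have ha0 : a q₀ = 0 := tendsto_nhds_unique hlim hzero
    -- induct on the remaining components
    have hih := ih (s.erase q₀) (by rw [Finset.card_erase_of_mem hq₀s, hs]; rfl)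
      (fun r hr => hpos r (Finset.mem_of_mem_erase hr)) a ?_
    · by_cases hqq : q = q₀
      · rw [hqq]; exact ha0
      · exact hih q (Finset.mem_erase.2 ⟨hqq, hq⟩)
    · intro x
      have := hsum x
      rw [← Finset.add_sum_erase s _ hq₀s] at this
      rw [ha0, zero_mul, zero_add] at this
      exact this

lemma wd_sum {ι : Type*} (s : Finset ι) (f : ι → ℝ → ℝ≥0∞) (hf : ∀ i, Measurable (f i)) :
    ∑ i ∈ s, (volume : Measure ℝ).withDensity (f i)
      = (volume : Measure ℝ).withDensity (fun x => ∑ i ∈ s, f i x) := by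
  induction s using Finset.cons_induction with
  | empty => simp
  | cons i s hi ih =>
    rw [Finset.sum_cons, ih]
    rw [← withDensity_add_left (hf i)]
    congr 1
    funext x
    simp [Finset.sum_cons]

lemma mix_density {k : ℕ} (w u V : Fin k → ℝ) (hV : ∀ i, 0 < V i) :
    (∑ i, ENNReal.ofReal (w i) • gaussianReal (u i) ((V i).toNNReal))
      = (volume : Measure ℝ).withDensity
        (fun x => ∑ i, ENNReal.ofReal (w i) * gaussianPDF (u i) ((V i).toNNReal) x) := by
  rw [← wd_sum _ _ (fun i => (measurable_gaussianPDF _ _).const_mul _)]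
  refine Finset.sum_congr rfl fun i _ => ?_
  rw [gaussianReal_of_var_ne_zero _ (by simp [Real.toNNReal_eq_zero, not_le, hV i]),
    ← withDensity_smul _ (measurable_gaussianPDF _ _)]
  rfl

noncomputable def gK (q : ℝ × ℝ) (x : ℝ) : ℝ :=
  (Real.sqrt (2 * Real.pi * q.2))⁻¹ * Real.exp (-(x - q.1) ^ 2 / (2 * q.2))

lemma gK_cont (q : ℝ × ℝ) : Continuous (gK q) := by
  unfold gK
  fun_prop

lemma gK_nonneg (q : ℝ × ℝ) (x : ℝ) : 0 ≤ gK q x := by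
  unfold gK
  positivity

lemma gK_pdf (u V : ℝ) (hV : 0 < V) (x : ℝ) :
    gaussianPDFReal u V.toNNReal x = gK (u, V) x := by
  rw [gaussianPDFReal, gK, Real.coe_toNNReal _ hV.le]

lemma mix_pointwise {k : ℕ} (m μ v : Fin k → ℝ)
    (hm : ∀ i, 0 ≤ m i) (hv : ∀ i, 0 < v i)
    (m' μ' v' : Fin k → ℝ)
    (hm' : ∀ i, 0 ≤ m' i) (hv' : ∀ i, 0 < v' i)
    (heq : (∑ i, ENNReal.ofReal (m' i) • gaussianReal (μ' i) ((v' i).toNNReal))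
        = (∑ i, ENNReal.ofReal (m i) • gaussianReal (μ i) ((v i).toNNReal))) :
    ∀ x : ℝ, ∑ i, m' i * gK (μ' i, v' i) x = ∑ i, m i * gK (μ i, v i) x := by
  rw [mix_density m' μ' v' hv', mix_density m μ v hv] at heq
  rw [withDensity_eq_iff_of_sigmaFinite
    (Finset.aemeasurable_fun_sum _ fun i _ => ((measurable_gaussianPDF _ _).const_mul _).aemeasurable)
    (Finset.aemeasurable_fun_sum _ fun i _ => ((measurable_gaussianPDF _ _).const_mul _).aemeasurable)]
    at heq
  have hof : ∀ (w u V : Fin k → ℝ), (∀ i, 0 ≤ w i) → (∀ i, 0 < V i) → ∀ x : ℝ,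
      (∑ i, ENNReal.ofReal (w i) * gaussianPDF (u i) ((V i).toNNReal) x)
        = ENNReal.ofReal (∑ i, w i * gK (u i, V i) x) := by
    intro w u V hw hV x
    rw [ENNReal.ofReal_sum_of_nonneg (fun i _ => mul_nonneg (hw i) (gK_nonneg _ _))]
    refine Finset.sum_congr rfl fun i _ => ?_
    rw [gaussianPDF, gK_pdf _ _ (hV i), ← ENNReal.ofReal_mul (hw i)]
  have heq' : (fun x => ∑ i, m' i * gK (μ' i, v' i) x) =ᵐ[volume]
      (fun x => ∑ i, m i * gK (μ i, v i) x) := by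
    filter_upwards [heq] with x hx
    rw [hof m' μ' v' hm' hv' x, hof m μ v hm hv x] at hx
    rwa [ENNReal.ofReal_eq_ofReal_iff
      (Finset.sum_nonneg fun i _ => mul_nonneg (hm' i) (gK_nonneg _ _))
      (Finset.sum_nonneg fun i _ => mul_nonneg (hm i) (gK_nonneg _ _))] at hx
  have hc : ∀ (w u V : Fin k → ℝ), Continuous (fun x => ∑ i, w i * gK (u i, V i) x) :=
    fun w u V => continuous_finset_sum _ fun i _ => continuous_const.mul (gK_cont _)
  have := (Continuous.ae_eq_iff_eq volume (hc m' μ' v') (hc m μ v)).1 heq'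
  exact fun x => congrFun this x


/-- Identifiability of one-dimensional Gaussian mixtures: if a `k`-component
Gaussian mixture has pairwise-distinct components `N(μ_i, v_i)` and strictly positive weights
`m_i`, then any parameter vector `(m'_i, μ'_i, v'_i)` with `m'_i ∈ [0,1]`, `Σ m'_i = 1`,
`v'_i > 0` producing the same mixture distribution is a permutation of `(m_i, μ_i, v_i)`. -/
theorem stmt_16 {k : ℕ} (m μ v : Fin k → ℝ)
    (hm : ∀ i, 0 < m i) (hmsum : ∑ i, m i = 1)
    (hv : ∀ i, 0 < v i)
    (hdist : ∀ i j, i ≠ j → (μ i, v i) ≠ (μ j, v j))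
    (m' μ' v' : Fin k → ℝ)
    (hm' : ∀ i, m' i ∈ Set.Icc (0 : ℝ) 1) (hm'sum : ∑ i, m' i = 1)
    (hv' : ∀ i, 0 < v' i)
    (heq : (∑ i, ENNReal.ofReal (m' i) • gaussianReal (μ' i) ((v' i).toNNReal))
        = (∑ i, ENNReal.ofReal (m i) • gaussianReal (μ i) ((v i).toNNReal))) :
    ∃ π : Equiv.Perm (Fin k), ∀ i, m' i = m (π i) ∧ μ' i = μ (π i) ∧ v' i = v (π i) := by
  have hpt := mix_pointwise m μ v (fun i => (hm i).le) hv m' μ' v'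
    (fun i => (hm' i).1) hv' heq
  set p : Fin k → ℝ × ℝ := fun j => (μ j, v j) with hp
  set p' : Fin k → ℝ × ℝ := fun i => (μ' i, v' i) with hp'
  have hpinj : Function.Injective p := by
    intro i j hij
    by_contra hne
    exact hdist i j hne hij
  set s : Finset (ℝ × ℝ) := Finset.image p Finset.univ ∪ Finset.image p' Finset.univ with hs
  have hmem : ∀ j, p j ∈ s := fun j =>
    Finset.mem_union_left _ (Finset.mem_image_of_mem p (Finset.mem_univ j))
  have hmem' : ∀ i, p' i ∈ s := fun i =>
    Finset.mem_union_right _ (Finset.mem_image_of_mem p' (Finset.mem_univ i))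
  have hspos : ∀ q ∈ s, 0 < q.2 := by
    intro q hq
    rcases Finset.mem_union.1 hq with h | h <;>
      obtain ⟨j, _, rfl⟩ := Finset.mem_image.1 h
    · exact hv j
    · exact hv' j
  have regroup : ∀ (w : Fin k → ℝ) (f : Fin k → ℝ × ℝ), (∀ j, f j ∈ s) → ∀ x : ℝ,
      ∑ j, w j * gK (f j) x
        = ∑ q ∈ s, (∑ j ∈ Finset.univ.filter (fun j => f j = q), w j) * gK q x := by
    intro w f hf x
    rw [← Finset.sum_fiberwise_of_maps_to (fun j _ => hf j) (fun j => w j * gK (f j) x)]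
    refine Finset.sum_congr rfl fun q hq => ?_
    rw [Finset.sum_mul]
    refine Finset.sum_congr rfl fun j hj => ?_
    rw [(Finset.mem_filter.1 hj).2]
  -- coefficients of the combined function
  set A : ℝ × ℝ → ℝ := fun q => ∑ j ∈ Finset.univ.filter (fun j => p j = q), m j with hA
  set A' : ℝ × ℝ → ℝ := fun q => ∑ i ∈ Finset.univ.filter (fun i => p' i = q), m' i with hA'
  set a : ℝ × ℝ → ℝ := fun q => (A' q - A q) * (Real.sqrt (2 * Real.pi * q.2))⁻¹ with ha
  have hx : ∀ x : ℝ, ∑ q ∈ s, a q * Real.exp (-(x - q.1) ^ 2 / (2 * q.2)) = 0 := by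
    intro x
    have h1 := regroup m' p' hmem' x
    have h2 := regroup m p hmem x
    have h3 : ∑ q ∈ s, a q * Real.exp (-(x - q.1) ^ 2 / (2 * q.2))
        = (∑ q ∈ s, A' q * gK q x) - ∑ q ∈ s, A q * gK q x := by
      rw [← Finset.sum_sub_distrib]
      refine Finset.sum_congr rfl fun q hq => ?_
      simp only [ha, gK]
      ring
    rw [h3, ← h1, ← h2]
    have := hpt x
    simp only [hp, hp'] at *
    rw [this, sub_self]
  have hazero := gauss_li s.card s rfl hspos a hx
  have hAA : ∀ q ∈ s, A' q = A q := by
    intro q hq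
    have h0 := hazero q hq
    have hC : (Real.sqrt (2 * Real.pi * q.2))⁻¹ ≠ 0 := by
      have := hspos q hq
      positivity
    have := mul_eq_zero.1 h0
    rcases this with h | h
    · linarith [sub_eq_zero.1 (by linarith : A' q - A q = 0)]
    · exact absurd h hC
  have hfilterp : ∀ j, Finset.univ.filter (fun j' => p j' = p j) = {j} := by
    intro j
    ext j'
    simp [hpinj.eq_iff]
  have hAj : ∀ j, A (p j) = m j := by
    intro j
    rw [hA]
    simp only [hfilterp j, Finset.sum_singleton]
  set S : Fin k → Finset (Fin k) := fun j => Finset.univ.filter (fun i => p' i = p j) with hS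
  have hSsum : ∀ j, ∑ i ∈ S j, m' i = m j := by
    intro j
    have := hAA (p j) (hmem j)
    rw [hAj j] at this
    exact this
  have hSne : ∀ j, (S j).Nonempty := by
    intro j
    rw [Finset.nonempty_iff_ne_empty]
    intro h
    have := hSsum j
    rw [h, Finset.sum_empty] at this
    exact absurd this.symm (ne_of_gt (hm j))
  have hdisj : ∀ j ∈ Finset.univ, ∀ j' ∈ (Finset.univ : Finset (Fin k)), j ≠ j' →
      Disjoint (S j) (S j') := by
    intro j _ j' _ hne
    rw [Finset.disjoint_left]
    intro i hi hi'
    have h1 := (Finset.mem_filter.1 hi).2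
    have h2 := (Finset.mem_filter.1 hi').2
    exact hne (hpinj (h1 ▸ h2 ▸ rfl))
  have hcard_bi : (Finset.univ.biUnion S).card = ∑ j, (S j).card :=
    Finset.card_biUnion hdisj
  have hk_le : (k : ℕ) ≤ ∑ j, (S j).card := by
    calc k = ∑ _j : Fin k, 1 := by simp
    _ ≤ ∑ j, (S j).card := Finset.sum_le_sum fun j _ => Finset.card_pos.2 (hSne j)
  have hle_k : ∑ j, (S j).card ≤ k := by
    rw [← hcard_bi]
    calc (Finset.univ.biUnion S).card ≤ (Finset.univ : Finset (Fin k)).card :=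
      Finset.card_le_card (Finset.subset_univ _)
    _ = k := Finset.card_fin k
  have hsum_eq : ∑ j, (S j).card = k := le_antisymm hle_k hk_le
  have hcard1 : ∀ j, (S j).card = 1 := by
    by_contra h
    push_neg at h
    obtain ⟨j₀, hj₀⟩ := h
    have h2 : 2 ≤ (S j₀).card := by
      have := Finset.card_pos.2 (hSne j₀)
      omega
    have hsplit : ∑ j, (S j).card
        = (S j₀).card + ∑ j ∈ Finset.univ.erase j₀, (S j).card :=
      (Finset.add_sum_erase _ _ (Finset.mem_univ j₀)).symm
    have h3 : (Finset.univ.erase j₀).card ≤ ∑ j ∈ Finset.univ.erase j₀, (S j).card := by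
      rw [Finset.card_eq_sum_ones]
      exact Finset.sum_le_sum fun j _ => Finset.card_pos.2 (hSne j)
    have h4 : (Finset.univ.erase j₀).card = k - 1 := by
      rw [Finset.card_erase_of_mem (Finset.mem_univ j₀), Finset.card_fin]
    have h5 : 1 ≤ k := by
      have := Fin.pos j₀
      omega
    omega
  have hcover : Finset.univ.biUnion S = Finset.univ :=
    Finset.eq_of_subset_of_card_le (Finset.subset_univ _)
      (by rw [hcard_bi, hsum_eq, Finset.card_fin])
  choose σ hσ using fun j => Finset.card_eq_one.1 (hcard1 j)
  have hσmem : ∀ j, σ j ∈ S j := fun j => (hσ j) ▸ Finset.mem_singleton_self (σ j)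
  have hσinj : Function.Injective σ := by
    intro j j' hjj'
    by_contra hne
    exact Finset.disjoint_left.1 (hdisj j (Finset.mem_univ j) j' (Finset.mem_univ j') hne)
      (hσmem j) (hjj' ▸ hσmem j')
  have hσbij : Function.Bijective σ := Finite.injective_iff_bijective.1 hσinj
  set e := Equiv.ofBijective σ hσbij with he
  refine ⟨e.symm, fun i => ?_⟩
  obtain ⟨j, _, hij⟩ := Finset.mem_biUnion.1 (hcover ▸ Finset.mem_univ i)
  have hiσ : i = σ j := Finset.mem_singleton.1 ((hσ j) ▸ hij)
  have hπ : e.symm i = j := by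
    apply e.injective
    rw [Equiv.apply_symm_apply]
    exact hiσ ▸ (Equiv.ofBijective_apply σ hσbij j).symm
  rw [hπ]
  have hpp : p' i = p j := (Finset.mem_filter.1 hij).2
  have hm'i : m' i = m j := by
    have := hSsum j
    rw [hσ j, ← hiσ, Finset.sum_singleton] at this
    exact this
  refine ⟨hm'i, ?_, ?_⟩
  · exact congrArg Prod.fst hpp
  · exact congrArg Prod.snd hpp
end
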